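/- Let Ω ⊆ ℝ³ be open, let ρ : Ω → ℝ be smooth with ρ > 0, and let s : Ω → ℝ³ be a smooth vector field with |s| = 1 everywhere and ∇·(ρ·s) = 0 on Ω. Define the helicity density h_s = s·(∇×s). Then the pointwise identity ρ·[((∇log ρ)×s + ∇×s)·∇]s = ∇(ρ·h_s) + ρ·s×[Δs + ((∇log ρ)·∇)s] − (s·∇)(ρ·∇×s) + s×∇(s·∇ρ) holds on Ω, where for a vector field v the expression (v·∇)s denotes the vector field with components Σ_j v_j ∂_j s^k, Δs is applied componentwise, and × is the cross product in ℝ³. -/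

import Mathlib

open Real

noncomputable section

/-- Partial derivative of a scalar function on ℝ³ in the `i`-th coordinate direction. -/
noncomputable def pd (i : Fin 3) (f : (Fin 3 → ℝ) → ℝ) (x : Fin 3 → ℝ) : ℝ :=
  fderiv ℝ f x (Pi.single i 1)

/-- Gradient of a scalar function on ℝ³. -/
noncomputable def grad3 (f : (Fin 3 → ℝ) → ℝ) (x : Fin 3 → ℝ) : Fin 3 → ℝ :=
  fun i => pd i f x

/-- Divergence of a vector field on ℝ³. -/
noncomputable def div3 (v : (Fin 3 → ℝ) → (Fin 3 → ℝ)) (x : Fin 3 → ℝ) : ℝ :=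
  ∑ i, pd i (fun y => v y i) x

/-- Curl of a vector field on ℝ³. -/
noncomputable def curl3 (v : (Fin 3 → ℝ) → (Fin 3 → ℝ)) (x : Fin 3 → ℝ) : Fin 3 → ℝ :=
  ![pd 1 (fun y => v y 2) x - pd 2 (fun y => v y 1) x,
    pd 2 (fun y => v y 0) x - pd 0 (fun y => v y 2) x,
    pd 0 (fun y => v y 1) x - pd 1 (fun y => v y 0) x]

/-- Euclidean Laplacian of a scalar function on ℝ³. -/
noncomputable def lap (f : (Fin 3 → ℝ) → ℝ) (x : Fin 3 → ℝ) : ℝ :=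
  ∑ i, pd i (fun y => pd i f y) x

/-- Cross product on ℝ³ (as `Fin 3 → ℝ`). -/
def cross3 (a b : Fin 3 → ℝ) : Fin 3 → ℝ :=
  ![a 1 * b 2 - a 2 * b 1, a 2 * b 0 - a 0 * b 2, a 0 * b 1 - a 1 * b 0]

section PdLemmas

variable {f g : (Fin 3 → ℝ) → ℝ} {x : Fin 3 → ℝ} {j m : Fin 3}

theorem pd_congr_nhds (h : f =ᶠ[nhds x] g) : pd j f x = pd j g x := by
  simp only [pd, h.fderiv_eq]

theorem pd_const' {c : ℝ} : pd j (fun _ => c) x = 0 := by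
  simp [pd]

theorem pd_add (hf : DifferentiableAt ℝ f x) (hg : DifferentiableAt ℝ g x) :
    pd j (fun y => f y + g y) x = pd j f x + pd j g x := by
  simp only [pd, fderiv_fun_add hf hg, ContinuousLinearMap.add_apply]

theorem pd_sub (hf : DifferentiableAt ℝ f x) (hg : DifferentiableAt ℝ g x) :
    pd j (fun y => f y - g y) x = pd j f x - pd j g x := by
  simp only [pd, fderiv_fun_sub hf hg, ContinuousLinearMap.sub_apply]

theorem pd_mul (hf : DifferentiableAt ℝ f x) (hg : DifferentiableAt ℝ g x) :
    pd j (fun y => f y * g y) x = pd j f x * g x + f x * pd j g x := by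
  simp only [pd, fderiv_fun_mul hf hg, ContinuousLinearMap.add_apply,
    ContinuousLinearMap.smul_apply, smul_eq_mul]
  ring

theorem pd_diffAt (hf : ContDiffAt ℝ 2 f x) :
    DifferentiableAt ℝ (fun y => pd j f y) x := by
  have h1 : ContDiffAt ℝ 1 (fderiv ℝ f) x := hf.fderiv_right (by norm_num)
  have h2 : ContDiffAt ℝ 1 (fun y => fderiv ℝ f y (Pi.single j 1)) x :=
    h1.clm_apply contDiffAt_const
  exact h2.differentiableAt one_ne_zero

theorem pd_comm (hf : ContDiffAt ℝ 2 f x) :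
    pd m (fun y => pd j f y) x = pd j (fun y => pd m f y) x := by
  have hd : DifferentiableAt ℝ (fderiv ℝ f) x :=
    (hf.fderiv_right (by norm_num : (1:WithTop ℕ∞) + 1 ≤ 2)).differentiableAt one_ne_zero
  have key : ∀ v u : Fin 3 → ℝ,
      fderiv ℝ (fun y => fderiv ℝ f y v) x u = fderiv ℝ (fderiv ℝ f) x u v := by
    intro v u
    have h4 := (((ContinuousLinearMap.apply ℝ ℝ v).hasFDerivAt).comp x hd.hasFDerivAt).fderiv
    calc fderiv ℝ (fun y => fderiv ℝ f y v) x u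
        = fderiv ℝ (⇑(ContinuousLinearMap.apply ℝ ℝ v) ∘ fderiv ℝ f) x u := rfl
      _ = fderiv ℝ (fderiv ℝ f) x u v := by rw [h4]; rfl
  have hsym := hf.isSymmSndFDerivAt (n := 2) (by simp)
  simp only [pd]
  rw [key, key]
  exact hsym _ _

end PdLemmas

/-- **Central vector-calculus identity for the spin evolution of a fluid with spin.**
For smooth `ρ > 0` and a smooth unit vector field `s` with `∇·(ρs) = 0`, setting
`h_s = s·(∇×s)`, one has on Ω:
`ρ [((∇log ρ)×s + ∇×s)·∇] s
  = ∇(ρ h_s) + ρ s×[Δs + ((∇log ρ)·∇)s] - (s·∇)(ρ ∇×s) + s×∇(s·∇ρ)`. -/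
theorem spin_advection_identity
    (Ω : Set (Fin 3 → ℝ)) (hΩ : IsOpen Ω)
    (ρ : (Fin 3 → ℝ) → ℝ) (s : (Fin 3 → ℝ) → Fin 3 → ℝ)
    (hρ : ContDiffOn ℝ (⊤ : ℕ∞) ρ Ω) (hρpos : ∀ x ∈ Ω, 0 < ρ x)
    (hss : ContDiffOn ℝ (⊤ : ℕ∞) s Ω)
    (hunit : ∀ x ∈ Ω, (∑ i, (s x i) ^ 2) = 1)
    (hdiv : ∀ x ∈ Ω, div3 (fun y i => ρ y * s y i) x = 0)
    (hs : (Fin 3 → ℝ) → ℝ)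
    (hhs : hs = fun y => ∑ i, s y i * curl3 s y i) :
    ∀ x ∈ Ω, ∀ k,
      ρ x * (∑ j, (cross3 (grad3 (fun y => Real.log (ρ y)) x) (s x) j + curl3 s x j)
                * pd j (fun y => s y k) x)
        = grad3 (fun y => ρ y * hs y) x k
          + ρ x * cross3 (s x)
              (fun l => lap (fun y => s y l) x
                + ∑ j, pd j (fun y => Real.log (ρ y)) x * pd j (fun y => s y l) x) k
          - (∑ j, s x j * pd j (fun y => ρ y * curl3 s y k) x)
          + cross3 (s x) (grad3 (fun y => ∑ j, s y j * pd j ρ y) x) k := by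
  subst hhs
  intro x hx
  have hxn : Ω ∈ nhds x := hΩ.mem_nhds hx
  have hρ2 : ∀ y ∈ Ω, ContDiffAt ℝ 2 ρ y := fun y hy =>
    (hρ.contDiffAt (hΩ.mem_nhds hy)).of_le (WithTop.coe_le_coe.mpr le_top)
  have hs2 : ∀ i : Fin 3, ∀ y ∈ Ω, ContDiffAt ℝ 2 (fun z => s z i) y := by
    intro i y hy
    have h := (hss.contDiffAt (hΩ.mem_nhds hy)).of_le (m := 2) (WithTop.coe_le_coe.mpr le_top)
    exact (contDiffAt_pi.mp h) i
  have dρ : ∀ y ∈ Ω, DifferentiableAt ℝ ρ y := fun y hy => (hρ2 y hy).differentiableAt two_ne_zero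
  have ds : ∀ i : Fin 3, ∀ y ∈ Ω, DifferentiableAt ℝ (fun z => s z i) y := fun i y hy =>
    (hs2 i y hy).differentiableAt two_ne_zero
  have dR : DifferentiableAt ℝ ρ x := dρ x hx
  have dS0 : DifferentiableAt ℝ (fun y => s y 0) x := ds 0 x hx
  have dS1 : DifferentiableAt ℝ (fun y => s y 1) x := ds 1 x hx
  have dS2 : DifferentiableAt ℝ (fun y => s y 2) x := ds 2 x hx
  have dR20 : DifferentiableAt ℝ (fun y => pd 0 ρ y) x := pd_diffAt (hρ2 x hx)
  have dR21 : DifferentiableAt ℝ (fun y => pd 1 ρ y) x := pd_diffAt (hρ2 x hx)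
  have dR22 : DifferentiableAt ℝ (fun y => pd 2 ρ y) x := pd_diffAt (hρ2 x hx)
  have dS200 : DifferentiableAt ℝ (fun y => pd 0 (fun z => s z 0) y) x := pd_diffAt (hs2 0 x hx)
  have dS201 : DifferentiableAt ℝ (fun y => pd 0 (fun z => s z 1) y) x := pd_diffAt (hs2 1 x hx)
  have dS202 : DifferentiableAt ℝ (fun y => pd 0 (fun z => s z 2) y) x := pd_diffAt (hs2 2 x hx)
  have dS210 : DifferentiableAt ℝ (fun y => pd 1 (fun z => s z 0) y) x := pd_diffAt (hs2 0 x hx)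
  have dS211 : DifferentiableAt ℝ (fun y => pd 1 (fun z => s z 1) y) x := pd_diffAt (hs2 1 x hx)
  have dS212 : DifferentiableAt ℝ (fun y => pd 1 (fun z => s z 2) y) x := pd_diffAt (hs2 2 x hx)
  have dS220 : DifferentiableAt ℝ (fun y => pd 2 (fun z => s z 0) y) x := pd_diffAt (hs2 0 x hx)
  have dS221 : DifferentiableAt ℝ (fun y => pd 2 (fun z => s z 1) y) x := pd_diffAt (hs2 1 x hx)
  have dS222 : DifferentiableAt ℝ (fun y => pd 2 (fun z => s z 2) y) x := pd_diffAt (hs2 2 x hx)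
  have dC0 : DifferentiableAt ℝ (fun y => pd 1 (fun z => s z 2) y - pd 2 (fun z => s z 1) y) x := dS212.sub dS221
  have dC1 : DifferentiableAt ℝ (fun y => pd 2 (fun z => s z 0) y - pd 0 (fun z => s z 2) y) x := dS220.sub dS202
  have dC2 : DifferentiableAt ℝ (fun y => pd 0 (fun z => s z 1) y - pd 1 (fun z => s z 0) y) x := dS201.sub dS210
  have dSC0 : DifferentiableAt ℝ (fun y => s y 0 * (pd 1 (fun z => s z 2) y - pd 2 (fun z => s z 1) y)) x := dS0.mul dC0
  have dSC1 : DifferentiableAt ℝ (fun y => s y 1 * (pd 2 (fun z => s z 0) y - pd 0 (fun z => s z 2) y)) x := dS1.mul dC1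
  have dSC2 : DifferentiableAt ℝ (fun y => s y 2 * (pd 0 (fun z => s z 1) y - pd 1 (fun z => s z 0) y)) x := dS2.mul dC2
  have dSC01 := dSC0.fun_add dSC1
  have dSC012 := dSC01.fun_add dSC2
  have dP0 : DifferentiableAt ℝ (fun y => s y 0 * pd 0 ρ y) x := dS0.mul dR20
  have dP1 : DifferentiableAt ℝ (fun y => s y 1 * pd 1 ρ y) x := dS1.mul dR21
  have dP2 : DifferentiableAt ℝ (fun y => s y 2 * pd 2 ρ y) x := dS2.mul dR22
  have dP01 := dP0.fun_add dP1
  have dP012 := dP01.fun_add dP2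
  have dQ0 : DifferentiableAt ℝ (fun y => pd 0 ρ y * s y 0) x := dR20.mul dS0
  have dRS0 : DifferentiableAt ℝ (fun y => ρ y * pd 0 (fun z => s z 0) y) x := dR.mul dS200
  have dG0 := dQ0.fun_add dRS0
  have dQ1 : DifferentiableAt ℝ (fun y => pd 1 ρ y * s y 1) x := dR21.mul dS1
  have dRS1 : DifferentiableAt ℝ (fun y => ρ y * pd 1 (fun z => s z 1) y) x := dR.mul dS211
  have dG1 := dQ1.fun_add dRS1
  have dQ2 : DifferentiableAt ℝ (fun y => pd 2 ρ y * s y 2) x := dR22.mul dS2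
  have dRS2 : DifferentiableAt ℝ (fun y => ρ y * pd 2 (fun z => s z 2) y) x := dR.mul dS222
  have dG2 := dQ2.fun_add dRS2
  have dG01 := dG0.fun_add dG1
  have dSS0 : DifferentiableAt ℝ (fun y => s y 0 * s y 0) x := dS0.mul dS0
  have dSS1 : DifferentiableAt ℝ (fun y => s y 1 * s y 1) x := dS1.mul dS1
  have dSS2 : DifferentiableAt ℝ (fun y => s y 2 * s y 2) x := dS2.mul dS2
  have dSS01 := dSS0.fun_add dSS1
  have hρx0 : ρ x ≠ 0 := ne_of_gt (hρpos x hx)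
  have hA : ∀ jj : Fin 3, pd jj ρ x = ρ x * pd jj (fun y => Real.log (ρ y)) x := by
    intro jj
    have h1 : pd jj (fun y => Real.log (ρ y)) x = (ρ x)⁻¹ * pd jj ρ x := by
      have h2 := (dR.hasFDerivAt.log hρx0).fderiv
      simp only [pd, h2, ContinuousLinearMap.smul_apply, smul_eq_mul]
    rw [h1]
    field_simp
  have hE : ∀ m jj i : Fin 3, pd m (fun y => pd jj (fun z => s z i) y) x
      = pd jj (fun y => pd m (fun z => s z i) y) x := fun m jj i => pd_comm (hs2 i x hx)
  have hU2 : ∀ jj : Fin 3,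
      pd jj (fun y => s y 0 * s y 0 + s y 1 * s y 1 + s y 2 * s y 2) x = 0 := by
    intro jj
    have hev : (fun y => s y 0 * s y 0 + s y 1 * s y 1 + s y 2 * s y 2) =ᶠ[nhds x]
        fun _ => (1 : ℝ) := by
      filter_upwards [hxn] with y hy
      have h1 := hunit y hy
      rw [Fin.sum_univ_three] at h1
      linear_combination h1
    rw [pd_congr_nhds hev, pd_const']
  simp (disch := assumption) only [pd_add, pd_mul] at hU2
  have hV2 : ∀ m : Fin 3,
      pd m (fun y => (pd 0 ρ y * s y 0 + ρ y * pd 0 (fun z => s z 0) y)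
        + (pd 1 ρ y * s y 1 + ρ y * pd 1 (fun z => s z 1) y)
        + (pd 2 ρ y * s y 2 + ρ y * pd 2 (fun z => s z 2) y)) x = 0 := by
    intro m
    have hev : (fun y => (pd 0 ρ y * s y 0 + ρ y * pd 0 (fun z => s z 0) y)
        + (pd 1 ρ y * s y 1 + ρ y * pd 1 (fun z => s z 1) y)
        + (pd 2 ρ y * s y 2 + ρ y * pd 2 (fun z => s z 2) y)) =ᶠ[nhds x]
        fun _ => (0 : ℝ) := by
      filter_upwards [hxn] with y hy
      have h1 := hdiv y hy
      simp only [div3, Fin.sum_univ_three] at h1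
      rw [pd_mul (dρ y hy) (ds 0 y hy), pd_mul (dρ y hy) (ds 1 y hy),
        pd_mul (dρ y hy) (ds 2 y hy)] at h1
      linear_combination h1
    rw [pd_congr_nhds hev, pd_const']
  simp (disch := assumption) only [pd_add, pd_mul] at hV2
  intro k
  have hk : k = 0 ∨ k = 1 ∨ k = 2 := by fin_cases k <;> simp
  rcases hk with rfl | rfl | rfl
  · simp only [grad3, cross3, curl3, div3, lap, Fin.sum_univ_three, Fin.isValue,
      Matrix.cons_val_zero, Matrix.cons_val_one, Matrix.head_cons, Matrix.cons_val_two,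
      Matrix.tail_cons]
    simp (disch := assumption) only [pd_add, pd_sub, pd_mul]
    linear_combination (norm := ring1)
        (-(s x 1)) * hV2 2 +
        ((s x 2)) * hV2 1 +
        ((1) * ρ x * s x 2) * hE 2 1 2 +
        ((1) * ρ x * s x 1) * hE 2 0 0 +
        ((1) * ρ x * s x 1) * hE 2 1 1 +
        ((-1) * ρ x * s x 2) * hE 1 0 0 +
        (((1)/2) * (pd 2 ρ x)) * hU2 1 +
        (((-1)/2) * (pd 1 ρ x)) * hU2 2 +
        ((1) * (s x 1 * pd 0 (fun y => s y 2) x)) * hA 0 +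
        ((-1) * (s x 1 * pd 2 (fun y => s y 0) x)) * hA 0 +
        ((-1) * (s x 2 * pd 0 (fun y => s y 1) x)) * hA 0 +
        ((1) * (s x 2 * pd 1 (fun y => s y 0) x)) * hA 0 +
        ((1) * (s x 0 * pd 2 (fun y => s y 0) x)) * hA 1 +
        ((1) * (s x 1 * pd 1 (fun y => s y 2) x)) * hA 1 +
        ((-1) * (s x 2 * pd 0 (fun y => s y 0) x)) * hA 1 +
        ((-1) * (s x 2 * pd 1 (fun y => s y 1) x)) * hA 1 +
        ((-1) * (s x 0 * pd 1 (fun y => s y 0) x)) * hA 2 +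
        ((1) * (s x 1 * pd 0 (fun y => s y 0) x)) * hA 2 +
        ((1) * (s x 1 * pd 2 (fun y => s y 2) x)) * hA 2 +
        ((-1) * (s x 2 * pd 2 (fun y => s y 1) x)) * hA 2
  · simp only [grad3, cross3, curl3, div3, lap, Fin.sum_univ_three, Fin.isValue,
      Matrix.cons_val_zero, Matrix.cons_val_one, Matrix.head_cons, Matrix.cons_val_two,
      Matrix.tail_cons]
    simp (disch := assumption) only [pd_add, pd_sub, pd_mul]
    linear_combination (norm := ring1)
        ((s x 0)) * hV2 2 -
        ((s x 2)) * hV2 0 +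
        ((-1) * ρ x * s x 2) * hE 1 0 1 +
        ((-1) * ρ x * s x 2) * hE 2 0 2 +
        ((-1) * ρ x * s x 0) * hE 2 0 0 +
        ((-1) * ρ x * s x 0) * hE 2 1 1 +
        (((-1)/2) * (pd 2 ρ x)) * hU2 0 +
        (((1)/2) * (pd 0 ρ x)) * hU2 2 +
        ((-1) * (s x 0 * pd 0 (fun y => s y 2) x)) * hA 0 +
        ((-1) * (s x 1 * pd 2 (fun y => s y 1) x)) * hA 0 +
        ((1) * (s x 2 * pd 0 (fun y => s y 0) x)) * hA 0 +
        ((1) * (s x 2 * pd 1 (fun y => s y 1) x)) * hA 0 +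
        ((-1) * (s x 0 * pd 1 (fun y => s y 2) x)) * hA 1 +
        ((1) * (s x 0 * pd 2 (fun y => s y 1) x)) * hA 1 +
        ((-1) * (s x 2 * pd 0 (fun y => s y 1) x)) * hA 1 +
        ((1) * (s x 2 * pd 1 (fun y => s y 0) x)) * hA 1 +
        ((-1) * (s x 0 * pd 1 (fun y => s y 1) x)) * hA 2 +
        ((-1) * (s x 0 * pd 2 (fun y => s y 2) x)) * hA 2 +
        ((1) * (s x 1 * pd 0 (fun y => s y 1) x)) * hA 2 +
        ((1) * (s x 2 * pd 2 (fun y => s y 0) x)) * hA 2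
  · simp only [grad3, cross3, curl3, div3, lap, Fin.sum_univ_three, Fin.isValue,
      Matrix.cons_val_zero, Matrix.cons_val_one, Matrix.head_cons, Matrix.cons_val_two,
      Matrix.tail_cons]
    simp (disch := assumption) only [pd_add, pd_sub, pd_mul]
    linear_combination (norm := ring1)
        (-(s x 0)) * hV2 1 +
        ((s x 1)) * hV2 0 +
        ((-1) * ρ x * s x 0) * hE 2 1 2 +
        ((1) * ρ x * s x 1) * hE 2 0 2 +
        ((1) * ρ x * s x 1) * hE 1 0 1 +
        ((1) * ρ x * s x 0) * hE 1 0 0 +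
        (((1)/2) * (ρ x * (pd 1 (fun y => Real.log (ρ y)) x))) * hU2 0 +
        (((-1)/2) * (ρ x * (pd 0 (fun y => Real.log (ρ y)) x))) * hU2 1 +
        ((1) * (s x 0 * pd 0 (fun y => s y 1) x)) * hA 0 +
        ((-1) * (s x 0 * pd 1 (fun y => s y 0) x)) * hA 0 +
        ((-1) * (s x 1 * pd 0 (fun y => s y 0) x)) * hA 0 +
        ((-1) * (s x 1 * pd 1 (fun y => s y 1) x)) * hA 0 +
        ((-1) * (s x 1 * pd 2 (fun y => s y 2) x)) * hA 0 +
        ((1) * (s x 0 * pd 0 (fun y => s y 0) x)) * hA 1 +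
        ((1) * (s x 0 * pd 1 (fun y => s y 1) x)) * hA 1 +
        ((1) * (s x 0 * pd 2 (fun y => s y 2) x)) * hA 1 +
        ((1) * (s x 1 * pd 0 (fun y => s y 1) x)) * hA 1 +
        ((-1) * (s x 1 * pd 1 (fun y => s y 0) x)) * hA 1 +
        ((-1) * (s x 0 * pd 1 (fun y => s y 2) x)) * hA 2 +
        ((1) * (s x 0 * pd 2 (fun y => s y 1) x)) * hA 2 +
        ((1) * (s x 1 * pd 0 (fun y => s y 2) x)) * hA 2 +
        ((-1) * (s x 1 * pd 2 (fun y => s y 0) x)) * hA 2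

end
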